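/- Given a positive normal affine monoid M of rank r with gp(M) = ℤ^r (identified inside ℤ^n = ℤ ⊕ ℤ^r, e = (1,0), and M₁ defined as above), there exist affine normal submonoids N₊ ⊆ ℤ₊e + M and N₋ ⊆ ℤ₋e + M₁ of ℤ^n such that: (i) e ∈ N₊ and −e ∈ N₋; (ii) N₋ ∩ M₁ = {0}; (iii) ℤe + N₊ = ℤe + N₋ = ℤe + M. -/

import Mathlib

open scoped NNReal
noncomputable section

/-- Real image of an integer vector. -/
def toR {r : ℕ} (v : Fin r → ℤ) : Fin r → ℝ := fun i => (v i : ℝ)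

/-- The group of differences of a submonoid of an abelian group. -/
def gp {G : Type*} [AddCommGroup G] (M : AddSubmonoid G) : AddSubgroup G :=
  AddSubgroup.closure (M : Set G)

/-- `M` is normal: `c • x ∈ M` for `x ∈ gp M`, `c ≥ 1` implies `x ∈ M`. -/
def IsNormalMonoid {G : Type*} [AddCommGroup G] (M : AddSubmonoid G) : Prop :=
  ∀ (c : ℕ) (x : G), 0 < c → x ∈ gp M → (c : ℤ) • x ∈ M → x ∈ M

/-- `M` is positive: no nontrivial units. -/
def IsPositiveMonoid {G : Type*} [AddCommGroup G] (M : AddSubmonoid G) : Prop :=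
  ∀ x ∈ M, -x ∈ M → x = 0

/-- The cone `ℝ₊M ⊆ ℝ^r` spanned by a submonoid `M ⊆ ℤ^r`. -/
def coneM {r : ℕ} (M : AddSubmonoid (Fin r → ℤ)) : Set (Fin r → ℝ) :=
  (Submodule.span ℝ≥0 (toR '' (M : Set (Fin r → ℤ))) : Submodule ℝ≥0 (Fin r → ℝ))

/-- The distinguished vector `e = (1,0) ∈ ℤ ⊕ ℤ^r`. -/
def eVec (r : ℕ) : ℤ × (Fin r → ℤ) := (1, 0)

/-- `M_i = (ℝ ⊕ ℝ₊M) ∩ (ℤ(x₁ - ie) + ⋯ + ℤ(x_r - ie))`, with `x_j - ie = (-i, x_j)`. -/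
def Mi {r : ℕ} (M : AddSubmonoid (Fin r → ℤ)) (x : Fin r → (Fin r → ℤ)) (i : ℕ) :
    Set (ℤ × (Fin r → ℤ)) :=
  {p | p ∈ AddSubgroup.closure (Set.range fun j => ((-(i : ℤ), x j) : ℤ × (Fin r → ℤ))) ∧
       toR p.2 ∈ coneM M}

/-- The submonoid (as a set) `ℤ₊e + M_i`. -/
def ZeMi {r : ℕ} (M : AddSubmonoid (Fin r → ℤ)) (x : Fin r → (Fin r → ℤ)) (i : ℕ) :
    Set (ℤ × (Fin r → ℤ)) :=
  {p | ∃ (z : ℕ) (m : ℤ × (Fin r → ℤ)), m ∈ Mi M x i ∧ p = (z : ℤ) • eVec r + m}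

namespace St8
variable {r : ℕ}

def toRL (r : ℕ) : (Fin r → ℤ) →ₗ[ℤ] (Fin r → ℝ) where
  toFun := toR
  map_add' a b := by funext i; simp [toR]
  map_smul' n a := by funext i; simp [toR]

def sig (b : Module.Basis (Fin r) ℤ (Fin r → ℤ)) (m : Fin r → ℤ) : ℤ := ∑ j, b.repr m j

lemma sig_add (b : Module.Basis (Fin r) ℤ (Fin r → ℤ)) (m m' : Fin r → ℤ) :
    sig b (m + m') = sig b m + sig b m' := by
  simp [sig, Finset.sum_add_distrib]

lemma sig_smul (b : Module.Basis (Fin r) ℤ (Fin r → ℤ)) (n : ℤ) (m : Fin r → ℤ) :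
    sig b (n • m) = n * sig b m := by
  unfold sig
  rw [map_smul]
  simp [Finset.mul_sum]

lemma sig_basis (b : Module.Basis (Fin r) ℤ (Fin r → ℤ)) (j : Fin r) : sig b (b j) = 1 := by
  simp [sig, Finsupp.single_apply]

@[simp] lemma sig_zero (b : Module.Basis (Fin r) ℤ (Fin r → ℤ)) : sig b 0 = 0 := by simp [sig]

lemma toR_decomp (b : Module.Basis (Fin r) ℤ (Fin r → ℤ)) (m : Fin r → ℤ) :
    toR m = ∑ j, (b.repr m j : ℤ) • toR (b j) := by
  have h := b.sum_repr m
  calc toR m = toRL r m := rfl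
    _ = toRL r (∑ j, b.repr m j • b j) := by rw [h]
    _ = ∑ j, (b.repr m j : ℤ) • toR (b j) := by
        rw [map_sum]
        exact Finset.sum_congr rfl fun j _ => by rw [map_smul]; rfl

lemma spanR (b : Module.Basis (Fin r) ℤ (Fin r → ℤ)) :
    ⊤ ≤ Submodule.span ℝ (Set.range fun j => toR (b j)) := by
  intro v _
  have hgen : ∀ m : Fin r → ℤ, toR m ∈ Submodule.span ℝ (Set.range fun j => toR (b j)) := by
    intro m
    rw [toR_decomp b m]
    exact Submodule.sum_mem _ fun j _ => zsmul_mem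
      (Submodule.subset_span (Set.mem_range_self j)) _
  have hv : v = ∑ i, v i • toR (Pi.single i (1:ℤ)) := by
    funext k
    simp [toR, Pi.single_apply, Finset.sum_apply, apply_ite]
  rw [hv]
  exact Submodule.sum_mem _ fun i _ => Submodule.smul_mem _ _ (hgen _)

def Br (b : Module.Basis (Fin r) ℤ (Fin r → ℤ)) : Module.Basis (Fin r) ℝ (Fin r → ℝ) :=
  basisOfTopLeSpanOfCardEqFinrank (fun j => toR (b j)) (spanR b) (by simp)

@[simp] lemma Br_apply (b : Module.Basis (Fin r) ℤ (Fin r → ℤ)) (j : Fin r) :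
    Br b j = toR (b j) := by
  simp [Br, coe_basisOfTopLeSpanOfCardEqFinrank]

lemma Br_repr_toR (b : Module.Basis (Fin r) ℤ (Fin r → ℤ)) (m : Fin r → ℤ) (j : Fin r) :
    (Br b).repr (toR m) j = (b.repr m j : ℝ) := by
  have : toR m = ∑ i, (b.repr m i : ℤ) • Br b i := by
    rw [toR_decomp b m]; simp
  rw [this, map_sum]
  simp only [map_zsmul, Module.Basis.repr_self, Finsupp.coe_finset_sum, Finset.sum_apply,
    Finsupp.smul_apply, Finsupp.single_apply]
  simp only [smul_ite, smul_zero, Finset.sum_ite_eq', Finset.mem_univ, if_true]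
  simp

lemma repr_nonneg (M : AddSubmonoid (Fin r → ℤ)) (b : Module.Basis (Fin r) ℤ (Fin r → ℤ))
    (hcone : coneM M ⊆
      (Submodule.span ℝ≥0 (Set.range fun j => toR (b j)) : Set (Fin r → ℝ)))
    (m : Fin r → ℤ) (hm : m ∈ M) (j : Fin r) : 0 ≤ b.repr m j := by
  have h1 : toR m ∈ Submodule.span ℝ≥0 (Set.range fun j => toR (b j)) :=
    hcone (Submodule.subset_span ⟨m, hm, rfl⟩)
  have key : ∀ v ∈ Submodule.span ℝ≥0 (Set.range fun j => toR (b j)),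
      ∀ k, 0 ≤ (Br b).repr v k := by
    intro v hv
    refine Submodule.span_induction (p := fun v _ => ∀ k, 0 ≤ (Br b).repr v k) ?_ ?_ ?_ ?_ hv
    · rintro _ ⟨j, rfl⟩ k
      rw [show (fun j => toR (b j)) j = Br b j from (Br_apply b j).symm]
      simp only [Module.Basis.repr_self, Finsupp.single_apply]
      split <;> norm_num
    · simp
    · intro u w _ _ hu hw k
      rw [map_add]
      exact add_nonneg (hu k) (hw k)
    · intro c u _ hu k
      have : (c : ℝ≥0) • u = (c : ℝ) • u := rfl
      rw [this, map_smul]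
      exact mul_nonneg c.2 (hu k)
  have := key _ h1 j
  rw [Br_repr_toR] at this
  exact_mod_cast this

def fHom (b : Module.Basis (Fin r) ℤ (Fin r → ℤ)) : (ℤ × (Fin r → ℤ)) →+ ℤ :=
  AddMonoidHom.mk' (fun p => p.1 + sig b p.2) (by
    intro p q
    simp [sig_add]
    ring)

lemma fst_of_mem_closure (b : Module.Basis (Fin r) ℤ (Fin r → ℤ)) (p : ℤ × (Fin r → ℤ))
    (hp : p ∈ AddSubgroup.closure (Set.range fun j => (((-1 : ℤ), b j) : ℤ × (Fin r → ℤ)))) :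
    p.1 = - sig b p.2 := by
  have h : AddSubgroup.closure (Set.range fun j => (((-1 : ℤ), b j) : ℤ × (Fin r → ℤ)))
      ≤ (fHom b).ker := by
    rw [AddSubgroup.closure_le]
    rintro _ ⟨j, rfl⟩
    simp [AddMonoidHom.mem_ker, fHom, sig_basis]
  have := h hp
  simp only [AddMonoidHom.mem_ker, fHom, AddMonoidHom.mk'_apply] at this
  linarith

lemma mem_closure_self (b : Module.Basis (Fin r) ℤ (Fin r → ℤ)) (m : Fin r → ℤ) :
    ((- sig b m, m) : ℤ × (Fin r → ℤ)) ∈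
      AddSubgroup.closure (Set.range fun j => (((-1 : ℤ), b j) : ℤ × (Fin r → ℤ))) := by
  have key : ((- sig b m, m) : ℤ × (Fin r → ℤ))
      = ∑ j, b.repr m j • (((-1 : ℤ), b j) : ℤ × (Fin r → ℤ)) := by
    have h1 : (∑ j, b.repr m j • (((-1 : ℤ), b j) : ℤ × (Fin r → ℤ))).1 = - sig b m := by
      simp [Prod.fst_sum, sig, Finset.sum_neg_distrib]
    have h2 : (∑ j, b.repr m j • (((-1 : ℤ), b j) : ℤ × (Fin r → ℤ))).2 = m := by
      rw [Prod.snd_sum]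
      simp only [Prod.smul_snd]
      exact b.sum_repr m
    exact Prod.ext h1.symm h2.symm
  rw [key]
  exact sum_mem fun j _ => zsmul_mem (AddSubgroup.subset_closure (Set.mem_range_self j)) _

end St8

theorem statement8 {r : ℕ} (M : AddSubmonoid (Fin r → ℤ))
    (hFG : M.FG) (hpos : IsPositiveMonoid M) (hnorm : IsNormalMonoid M) (hgp : gp M = ⊤)
    (x : Fin r → (Fin r → ℤ)) (hx : ∃ b : Module.Basis (Fin r) ℤ (Fin r → ℤ), x = ⇑b)
    (hcone : coneM M ⊆
      (Submodule.span ℝ≥0 (Set.range fun j => toR (x j)) : Set (Fin r → ℝ))) :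
    ∃ Nplus Nminus : AddSubmonoid (ℤ × (Fin r → ℤ)),
      Nplus.FG ∧ Nminus.FG ∧ IsNormalMonoid Nplus ∧ IsNormalMonoid Nminus ∧
      (∀ p ∈ Nplus, 0 ≤ p.1 ∧ p.2 ∈ M) ∧
      (∀ p ∈ Nminus, ∃ (z : ℕ) (m : ℤ × (Fin r → ℤ)), m ∈ Mi M x 1 ∧
        p = (-(z : ℤ)) • eVec r + m) ∧
      eVec r ∈ Nplus ∧ (-eVec r) ∈ Nminus ∧
      (∀ p ∈ Nminus, p ∈ Mi M x 1 → p = 0) ∧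
      {p : ℤ × (Fin r → ℤ) | ∃ (z : ℤ) (q : ℤ × (Fin r → ℤ)), q ∈ Nplus ∧ p = z • eVec r + q}
        = {p : ℤ × (Fin r → ℤ) | p.2 ∈ M} ∧
      {p : ℤ × (Fin r → ℤ) | ∃ (z : ℤ) (q : ℤ × (Fin r → ℤ)), q ∈ Nminus ∧ p = z • eVec r + q}
        = {p : ℤ × (Fin r → ℤ) | p.2 ∈ M} := by
  obtain ⟨b, rfl⟩ := hx
  obtain ⟨S, hS⟩ := hFG
  have hrep : ∀ m ∈ M, ∀ j, 0 ≤ b.repr m j := fun m hm j => St8.repr_nonneg M b hcone m hm j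
  have hσnn : ∀ m ∈ M, 0 ≤ St8.sig b m := fun m hm =>
    Finset.sum_nonneg fun j _ => hrep m hm j
  have hσ0 : ∀ m ∈ M, St8.sig b m = 0 → m = 0 := by
    intro m hm h0
    have hz : ∀ j, b.repr m j = 0 := fun j =>
      (Finset.sum_eq_zero_iff_of_nonneg (fun j _ => hrep m hm j)).mp h0 j (Finset.mem_univ j)
    have : b.repr m = 0 := by
      ext j; exact hz j
    have h := congrArg (b.repr.symm) this
    simpa using h
  refine ⟨
    { carrier := {p | 0 ≤ p.1 ∧ p.2 ∈ M}
      zero_mem' := ⟨le_refl 0, M.zero_mem⟩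
      add_mem' := fun ha hb => ⟨add_nonneg ha.1 hb.1, M.add_mem ha.2 hb.2⟩ },
    { carrier := {p | p.2 ∈ M ∧ p.1 ≤ -2 * St8.sig b p.2}
      zero_mem' := ⟨M.zero_mem, by simp⟩
      add_mem' := by
        rintro p q hp hq
        refine ⟨M.add_mem hp.1 hq.1, ?_⟩
        have h := St8.sig_add b p.2 q.2
        show p.1 + q.1 ≤ -2 * St8.sig b (p.2 + q.2)
        rw [h]
        linarith [hp.2, hq.2] },
    ?_, ?_, ?_, ?_, ?_, ?_, ?_, ?_, ?_, ?_, ?_⟩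
  · -- Nplus FG
    refine ⟨insert ((1:ℤ), (0:Fin r → ℤ)) (S.image fun m => ((0:ℤ), m)), ?_⟩
    apply le_antisymm
    · rw [AddSubmonoid.closure_le]
      intro p hp
      simp only [Finset.coe_insert, Set.mem_insert_iff, Finset.coe_image,
        Set.mem_image, Finset.mem_coe] at hp
      rcases hp with rfl | ⟨m, hm, rfl⟩
      · exact ⟨zero_le_one, M.zero_mem⟩
      · exact ⟨le_refl 0, hS ▸ AddSubmonoid.subset_closure hm⟩
    · rintro ⟨z, m⟩ ⟨hz, hm⟩
      have h0 : ((0:ℤ), m) ∈ AddSubmonoid.closure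
          ((insert ((1:ℤ), (0:Fin r → ℤ)) (S.image fun m => ((0:ℤ), m)) : Finset _) :
            Set (ℤ × (Fin r → ℤ))) := by
        rw [← hS] at hm
        refine AddSubmonoid.closure_induction
          (motive := fun q _ => ((0:ℤ), q) ∈ AddSubmonoid.closure
            ((insert ((1:ℤ), (0:Fin r → ℤ)) (S.image fun m => ((0:ℤ), m)) : Finset _) :
              Set (ℤ × (Fin r → ℤ)))) ?_ ?_ ?_ hm
        · intro q hq
          exact AddSubmonoid.subset_closure (by
            simp only [Finset.coe_insert, Set.mem_insert_iff, Finset.coe_image,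
              Set.mem_image, Finset.mem_coe]
            exact Or.inr ⟨q, hq, rfl⟩)
        · exact AddSubmonoid.zero_mem _
        · intro a c _ _ ha hc
          have : ((0:ℤ), a + c) = ((0:ℤ), a) + ((0:ℤ), c) := by simp
          rw [this]
          exact AddSubmonoid.add_mem _ ha hc
      have heq : ((z, m) : ℤ × (Fin r → ℤ))
          = z.toNat • ((1:ℤ), (0:Fin r → ℤ)) + ((0:ℤ), m) := by
        apply Prod.ext
        · show z = z.toNat • (1:ℤ) + 0
          simp [Int.toNat_of_nonneg hz]
        · show m = z.toNat • (0 : Fin r → ℤ) + m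
          simp
      rw [heq]
      exact AddSubmonoid.add_mem _
        (AddSubmonoid.nsmul_mem _ (AddSubmonoid.subset_closure (by simp)) _) h0
  · -- Nminus FG
    refine ⟨insert ((-1:ℤ), (0:Fin r → ℤ)) (S.image fun m => (-2 * St8.sig b m, m)), ?_⟩
    apply le_antisymm
    · rw [AddSubmonoid.closure_le]
      intro p hp
      simp only [Finset.coe_insert, Set.mem_insert_iff, Finset.coe_image,
        Set.mem_image, Finset.mem_coe] at hp
      rcases hp with rfl | ⟨m, hm, rfl⟩
      · exact ⟨M.zero_mem, by simp⟩
      · exact ⟨hS ▸ AddSubmonoid.subset_closure hm, le_refl _⟩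
    · rintro ⟨z, m⟩ ⟨hm, hz⟩
      have h0 : ((-2 * St8.sig b m, m) : ℤ × (Fin r → ℤ)) ∈ AddSubmonoid.closure
          ((insert ((-1:ℤ), (0:Fin r → ℤ)) (S.image fun m => (-2 * St8.sig b m, m)) : Finset _) :
            Set (ℤ × (Fin r → ℤ))) := by
        have hm' := hm
        rw [← hS] at hm'
        refine AddSubmonoid.closure_induction
          (motive := fun q _ => ((-2 * St8.sig b q, q) : ℤ × (Fin r → ℤ)) ∈ AddSubmonoid.closure
            ((insert ((-1:ℤ), (0:Fin r → ℤ)) (S.image fun m => (-2 * St8.sig b m, m)) : Finset _) :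
              Set (ℤ × (Fin r → ℤ)))) ?_ ?_ ?_ hm'
        · intro q hq
          exact AddSubmonoid.subset_closure (by
            simp only [Finset.coe_insert, Set.mem_insert_iff, Finset.coe_image,
              Set.mem_image, Finset.mem_coe]
            exact Or.inr ⟨q, hq, rfl⟩)
        · rw [St8.sig_zero, mul_zero]
          exact AddSubmonoid.zero_mem _
        · intro a c _ _ ha hc
          have : ((-2 * St8.sig b (a + c), a + c) : ℤ × (Fin r → ℤ))
              = (-2 * St8.sig b a, a) + (-2 * St8.sig b c, c) := by
            rw [St8.sig_add]
            apply Prod.ext <;> simp <;> ring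
          rw [this]
          exact AddSubmonoid.add_mem _ ha hc
      have hnn : 0 ≤ -2 * St8.sig b m - z := by linarith
      have heq : ((z, m) : ℤ × (Fin r → ℤ))
          = (-2 * St8.sig b m - z).toNat • ((-1:ℤ), (0:Fin r → ℤ)) + (-2 * St8.sig b m, m) := by
        apply Prod.ext
        · show z = (-2 * St8.sig b m - z).toNat • (-1:ℤ) + (-2 * St8.sig b m)
          rw [nsmul_eq_mul, Int.toNat_of_nonneg hnn]
          ring
        · show m = (-2 * St8.sig b m - z).toNat • (0 : Fin r → ℤ) + m
          simp
      rw [heq]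
      exact AddSubmonoid.add_mem _
        (AddSubmonoid.nsmul_mem _ (AddSubmonoid.subset_closure (by simp)) _) h0
  · -- Nplus normal
    intro c p hc _ hcp
    obtain ⟨h1, h2⟩ := hcp
    have hcpos : (0:ℤ) < (c:ℤ) := by exact_mod_cast hc
    have h1' : 0 ≤ (c:ℤ) * p.1 := by
      simpa [smul_eq_mul] using h1
    constructor
    · by_contra h
      push_neg at h
      nlinarith
    · exact hnorm c p.2 hc (by rw [hgp]; trivial) h2
  · -- Nminus normal
    intro c p hc _ hcp
    obtain ⟨h1, h2⟩ := hcp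
    have hcpos : (0:ℤ) < (c:ℤ) := by exact_mod_cast hc
    have h2' : (c:ℤ) * p.1 ≤ -2 * ((c:ℤ) * St8.sig b p.2) := by
      have := h2
      rwa [show ((c:ℤ) • p).2 = (c:ℤ) • p.2 from rfl, St8.sig_smul,
        show ((c:ℤ) • p).1 = (c:ℤ) * p.1 from rfl] at this
    refine ⟨hnorm c p.2 hc (by rw [hgp]; trivial) h1, ?_⟩
    nlinarith
  · -- Nplus bound
    exact fun p hp => hp
  · -- Nminus in Z₋e + M₁
    rintro ⟨z, m⟩ ⟨hm, hz⟩
    have hσ := hσnn m hm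
    have hnn : 0 ≤ -St8.sig b m - z := by linarith
    refine ⟨(-St8.sig b m - z).toNat, (-St8.sig b m, m), ⟨?_, ?_⟩, ?_⟩
    · simp only [Nat.cast_one]
      exact St8.mem_closure_self b m
    · exact Submodule.subset_span (Set.mem_image_of_mem _ hm)
    · apply Prod.ext
      · show z = -(((-St8.sig b m - z).toNat : ℤ)) • (1:ℤ) + (-St8.sig b m)
        rw [smul_eq_mul, Int.toNat_of_nonneg hnn]
        ring
      · show m = -(((-St8.sig b m - z).toNat : ℤ)) • (0 : Fin r → ℤ) + m
        simp
  · -- e ∈ Nplus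
    exact ⟨zero_le_one, M.zero_mem⟩
  · -- -e ∈ Nminus
    refine ⟨?_, ?_⟩
    · show (-eVec r).2 ∈ M
      simp only [eVec, Prod.snd_neg, neg_zero]
      exact M.zero_mem
    · show (-eVec r).1 ≤ -2 * St8.sig b (-eVec r).2
      simp [eVec]
  · -- Nminus ∩ M₁ = 0
    rintro ⟨z, m⟩ ⟨hm, hz⟩ ⟨hcl, -⟩
    simp only [Nat.cast_one] at hcl
    have h1 : z = - St8.sig b m := St8.fst_of_mem_closure b (z, m) hcl
    have h2 : 0 ≤ St8.sig b m := hσnn m hm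
    have hz' : z ≤ -2 * St8.sig b m := hz
    have h3 : St8.sig b m = 0 := by linarith
    have h4 : m = 0 := hσ0 m hm h3
    subst h4
    simp only [St8.sig_zero] at h1
    simp [h1]
  · -- Ze + Nplus = M
    ext ⟨z, m⟩
    simp only [Set.mem_setOf_eq]
    constructor
    · rintro ⟨w, q, hq, heq⟩
      have : m = (w • eVec r + q).2 := congrArg Prod.snd heq
      rw [this]
      show w • (0 : Fin r → ℤ) + q.2 ∈ M
      simpa using hq.2
    · intro hm
      refine ⟨z, (0, m), ⟨le_refl 0, hm⟩, ?_⟩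
      apply Prod.ext
      · show z = z • (1:ℤ) + 0
        simp
      · show m = z • (0 : Fin r → ℤ) + m
        simp
  · -- Ze + Nminus = M
    ext ⟨z, m⟩
    simp only [Set.mem_setOf_eq]
    constructor
    · rintro ⟨w, q, hq, heq⟩
      have : m = (w • eVec r + q).2 := congrArg Prod.snd heq
      rw [this]
      show w • (0 : Fin r → ℤ) + q.2 ∈ M
      simpa using hq.1
    · intro hm
      refine ⟨z + 2 * St8.sig b m, (-2 * St8.sig b m, m), ⟨hm, le_refl _⟩, ?_⟩
      apply Prod.ext
      · show z = (z + 2 * St8.sig b m) • (1:ℤ) + (-2 * St8.sig b m)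
        rw [smul_eq_mul]
        ring
      · show m = (z + 2 * St8.sig b m) • (0 : Fin r → ℤ) + m
        simp
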